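/- Let k ≥ 1. For all real numbers x1,…,x_{3k+1}: 2ᵏ·C(3k,k)·(∑_{i=1}^{3k+1} xᵢ²)² = ∑(x_{i₁} ± x_{i₂} ± ⋯ ± x_{i_{k+1}})⁴, where the sum is over all (k+1)-element subsets {i₁<i₂<⋯<i_{k+1}} of {1,…,3k+1} and all 2ᵏ sign combinations with the sign of x_{i₁} fixed positive. -/

import Mathlib

open Finset

noncomputable def sgn (b : Bool) : ℝ := if b then 1 else -1

lemma sgn_true : sgn true = 1 := rfl
lemma sgn_false : sgn false = -1 := rfl
lemma sgn_not (b : Bool) : sgn (!b) = - sgn b := by cases b <;> simp [sgn]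

section aux

variable {ι : Type*} [Fintype ι] [DecidableEq ι]

def SgnSet (A : Finset ι) : Finset (ι → Bool) :=
  univ.filter (fun ε => ∀ j, j ∉ A → ε j = true)

lemma mem_SgnSet {A : Finset ι} {ε : ι → Bool} :
    ε ∈ SgnSet A ↔ ∀ j ∉ A, ε j = true := by
  simp [SgnSet]

lemma SgnSet_empty : SgnSet (∅ : Finset ι) = {fun _ => true} := by
  ext ε
  simp [mem_SgnSet, funext_iff]

lemma sgnSet_split {a : ι} {B : Finset ι} (ha : a ∉ B) (G : (ι → Bool) → ℝ) :
    ∑ ε ∈ SgnSet (insert a B), G ε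
      = ∑ ε ∈ SgnSet B, (G ε + G (Function.update ε a false)) := by
  have h1 : (SgnSet (insert a B)).filter (fun ε => ε a = true) = SgnSet B := by
    ext ε
    simp only [mem_filter, mem_SgnSet, mem_insert]
    constructor
    · rintro ⟨h, ha'⟩ j hj
      by_cases hja : j = a
      · subst hja; exact ha'
      · exact h j (by tauto)
    · intro h
      exact ⟨fun j hj => h j (fun hjB => hj (Or.inr hjB)), h a ha⟩
  have h2 : ∑ ε ∈ (SgnSet (insert a B)).filter (fun ε => ¬ (ε a = true)), G ε
      = ∑ ε ∈ SgnSet B, G (Function.update ε a false) := by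
    refine Finset.sum_nbij' (fun ε => Function.update ε a true)
      (fun ε => Function.update ε a false) ?_ ?_ ?_ ?_ ?_
    · intro ε hε
      simp only [mem_filter, mem_SgnSet, mem_insert] at hε
      rw [mem_SgnSet]
      intro j hj
      by_cases hja : j = a
      · subst hja; simp
      · show Function.update ε a true j = true
        rw [Function.update_of_ne hja]
        exact hε.1 j (by tauto)
    · intro ε hε
      rw [mem_SgnSet] at hε
      simp only [mem_filter, mem_SgnSet, mem_insert]
      refine ⟨fun j hj => ?_, by simp⟩
      push_neg at hj
      rw [Function.update_of_ne hj.1]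
      exact hε j hj.2
    · intro ε hε
      simp only [mem_filter] at hε
      have : ε a = false := by simpa using hε.2
      show Function.update (Function.update ε a true) a false = ε
      rw [Function.update_idem, ← this, Function.update_eq_self]
    · intro ε hε
      rw [mem_SgnSet] at hε
      have : ε a = true := hε a ha
      show Function.update (Function.update ε a false) a true = ε
      rw [Function.update_idem, ← this, Function.update_eq_self]
    · intro ε hε
      have : ε a = false := by simpa using (Finset.mem_filter.mp hε).2
      show G ε = G (Function.update (Function.update ε a true) a false)
      rw [Function.update_idem, ← this, Function.update_eq_self]
  rw [← Finset.sum_filter_add_sum_filter_not (SgnSet (insert a B)) (fun ε => ε a = true),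
    h1, h2, ← Finset.sum_add_distrib]

lemma sgnSet_sum_one (A : Finset ι) :
    ∑ _ε ∈ SgnSet A, (1:ℝ) = 2 ^ A.card := by
  induction A using Finset.induction_on with
  | empty => simp [SgnSet_empty]
  | @insert a B ha ih =>
    rw [sgnSet_split ha, Finset.sum_add_distrib, ih,
      Finset.card_insert_of_notMem ha]
    ring

lemma sgnSet_sum_sq (A : Finset ι) (x : ι → ℝ) :
    ∑ ε ∈ SgnSet A, (∑ j ∈ A, sgn (ε j) * x j) ^ 2
      = 2 ^ A.card * ∑ j ∈ A, x j ^ 2 := by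
  induction A using Finset.induction_on with
  | empty => simp [SgnSet_empty]
  | @insert a B ha ih =>
    rw [sgnSet_split ha]
    have key : ∀ ε ∈ SgnSet B,
        ((∑ j ∈ insert a B, sgn (ε j) * x j) ^ 2
          + (∑ j ∈ insert a B, sgn (Function.update ε a false j) * x j) ^ 2)
        = 2 * x a ^ 2 * 1 + 2 * (∑ j ∈ B, sgn (ε j) * x j) ^ 2 := by
      intro ε hε
      have hεa : ε a = true := mem_SgnSet.mp hε a ha
      have h1 : ∑ j ∈ insert a B, sgn (ε j) * x j
          = x a + ∑ j ∈ B, sgn (ε j) * x j := by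
        rw [Finset.sum_insert ha, hεa, sgn_true, one_mul]
      have h2 : ∑ j ∈ insert a B, sgn (Function.update ε a false j) * x j
          = - x a + ∑ j ∈ B, sgn (ε j) * x j := by
        rw [Finset.sum_insert ha, Function.update_self, sgn_false]
        congr 1
        · ring
        · exact Finset.sum_congr rfl fun j hj => by
            rw [Function.update_of_ne (by rintro rfl; exact ha hj)]
      rw [h1, h2]; ring
    rw [Finset.sum_congr rfl key, Finset.sum_add_distrib, ← Finset.mul_sum,
      ← Finset.mul_sum, sgnSet_sum_one, ih, Finset.card_insert_of_notMem ha,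
      Finset.sum_insert ha]
    ring

lemma sgnSet_sum_four (A : Finset ι) (x : ι → ℝ) :
    ∑ ε ∈ SgnSet A, (∑ j ∈ A, sgn (ε j) * x j) ^ 4
      = 2 ^ A.card * (3 * (∑ j ∈ A, x j ^ 2) ^ 2 - 2 * ∑ j ∈ A, x j ^ 4) := by
  induction A using Finset.induction_on with
  | empty => simp [SgnSet_empty]
  | @insert a B ha ih =>
    rw [sgnSet_split ha]
    have key : ∀ ε ∈ SgnSet B,
        ((∑ j ∈ insert a B, sgn (ε j) * x j) ^ 4
          + (∑ j ∈ insert a B, sgn (Function.update ε a false j) * x j) ^ 4)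
        = 2 * x a ^ 4 * 1 + 12 * x a ^ 2 * (∑ j ∈ B, sgn (ε j) * x j) ^ 2
            + 2 * (∑ j ∈ B, sgn (ε j) * x j) ^ 4 := by
      intro ε hε
      have hεa : ε a = true := mem_SgnSet.mp hε a ha
      have h1 : ∑ j ∈ insert a B, sgn (ε j) * x j
          = x a + ∑ j ∈ B, sgn (ε j) * x j := by
        rw [Finset.sum_insert ha, hεa, sgn_true, one_mul]
      have h2 : ∑ j ∈ insert a B, sgn (Function.update ε a false j) * x j
          = - x a + ∑ j ∈ B, sgn (ε j) * x j := by
        rw [Finset.sum_insert ha, Function.update_self, sgn_false]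
        congr 1
        · ring
        · exact Finset.sum_congr rfl fun j hj => by
            rw [Function.update_of_ne (by rintro rfl; exact ha hj)]
      rw [h1, h2]; ring
    rw [Finset.sum_congr rfl key, Finset.sum_add_distrib, Finset.sum_add_distrib,
      ← Finset.mul_sum, ← Finset.mul_sum, ← Finset.mul_sum, sgnSet_sum_one, ih,
      sgnSet_sum_sq, Finset.card_insert_of_notMem ha,
      Finset.sum_insert ha, Finset.sum_insert ha]
    ring

lemma sgnSet_half (A : Finset ι) (x : ι → ℝ) (m : ι) (hm : m ∈ A) :
    2 * ∑ ε ∈ (SgnSet A).filter (fun ε => ε m = true),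
        (∑ j ∈ A, sgn (ε j) * x j) ^ 4
    = ∑ ε ∈ SgnSet A, (∑ j ∈ A, sgn (ε j) * x j) ^ 4 := by
  rw [← Finset.sum_filter_add_sum_filter_not (SgnSet A) (fun ε => ε m = true)]
  have key : ∑ ε ∈ (SgnSet A).filter (fun ε => ¬ ε m = true),
        (∑ j ∈ A, sgn (ε j) * x j) ^ 4
      = ∑ ε ∈ (SgnSet A).filter (fun ε => ε m = true),
        (∑ j ∈ A, sgn (ε j) * x j) ^ 4 := by
    have flipflip : ∀ ε : ι → Bool,
        (fun j => if j ∈ A then !((fun j' => if j' ∈ A then !(ε j') else ε j') j) else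
          (fun j' => if j' ∈ A then !(ε j') else ε j') j) = ε := by
      intro ε; funext j; by_cases hj : j ∈ A <;> simp [hj]
    refine Finset.sum_nbij' (fun ε j => if j ∈ A then !(ε j) else ε j)
      (fun ε j => if j ∈ A then !(ε j) else ε j) ?_ ?_ ?_ ?_ ?_
    · intro ε hε
      simp only [mem_filter, mem_SgnSet] at hε ⊢
      refine ⟨fun j hj => by simp [if_neg hj, hε.1 j hj], ?_⟩
      have : ε m = false := by simpa using hε.2
      simp [if_pos hm, this]
    · intro ε hε
      simp only [mem_filter, mem_SgnSet] at hε ⊢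
      refine ⟨fun j hj => by simp [if_neg hj, hε.1 j hj], ?_⟩
      simp [if_pos hm, hε.2]
    · intro ε _; exact flipflip ε
    · intro ε _; exact flipflip ε
    · intro ε _
      have : ∑ j ∈ A, sgn ((fun j => if j ∈ A then !(ε j) else ε j) j) * x j
          = - ∑ j ∈ A, sgn (ε j) * x j := by
        rw [← Finset.sum_neg_distrib]
        refine Finset.sum_congr rfl fun j hj => ?_
        simp only [if_pos hj, sgn_not]
        ring
      rw [this]
      ring
  rw [key]; ring

lemma card_powersetCard_filter_subset (s t : Finset ι) (ht : t ⊆ s) (r : ℕ) :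
    ((Finset.powersetCard (r + t.card) s).filter (fun A => t ⊆ A)).card
      = (s.card - t.card).choose r := by
  rw [← Finset.card_sdiff_of_subset ht, ← Finset.card_powersetCard r (s \ t)]
  refine Finset.card_nbij' (fun A => A \ t) (fun B => B ∪ t) ?_ ?_ ?_ ?_
  · intro A hA
    simp only [Finset.mem_coe, mem_filter, Finset.mem_powersetCard] at hA ⊢
    exact ⟨Finset.sdiff_subset_sdiff hA.1.1 Finset.Subset.rfl,
      by rw [Finset.card_sdiff_of_subset hA.2, hA.1.2, Nat.add_sub_cancel]⟩
  · intro B hB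
    rw [Finset.mem_coe, Finset.mem_powersetCard] at hB
    have hdisj : Disjoint B t := Finset.disjoint_of_subset_left hB.1 Finset.sdiff_disjoint
    simp only [Finset.mem_coe, mem_filter, Finset.mem_powersetCard]
    refine ⟨⟨Finset.union_subset (hB.1.trans (Finset.sdiff_subset)) ht, ?_⟩,
      Finset.subset_union_right⟩
    rw [Finset.card_union_of_disjoint hdisj, hB.2]
  · intro A hA
    simp only [Finset.mem_coe, mem_filter] at hA
    exact Finset.sdiff_union_of_subset hA.2
  · intro B hB
    rw [Finset.mem_coe, Finset.mem_powersetCard] at hB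
    have hdisj : Disjoint B t := Finset.disjoint_of_subset_left hB.1 Finset.sdiff_disjoint
    exact Finset.union_sdiff_cancel_right hdisj

end aux

lemma filter_eq {n : ℕ}
    (A : Finset (Fin n)) (hA : A.Nonempty) :
    (Finset.univ.filter (fun ε : Fin n → Bool =>
        (∀ j, j ∉ A → ε j = true) ∧ ∀ j ∈ A, (∀ i ∈ A, j ≤ i) → ε j = true))
    = (SgnSet A).filter (fun ε => ε (A.min' hA) = true) := by
  ext ε
  simp only [Finset.mem_filter, Finset.mem_univ, true_and, mem_SgnSet]
  constructor
  · rintro ⟨h1, h2⟩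
    exact ⟨h1, h2 _ (A.min'_mem hA) (fun i hi => A.min'_le i hi)⟩
  · rintro ⟨h1, h2⟩
    refine ⟨h1, fun j hj hjle => ?_⟩
    have hje : j = A.min' hA :=
      le_antisymm (hjle _ (A.min'_mem hA)) (A.min'_le j hj)
    rw [hje]; exact h2

lemma D_expand {ι : Type*} [DecidableEq ι] (A : Finset ι) (x : ι → ℝ) :
    3 * (∑ j ∈ A, x j ^ 2) ^ 2 - 2 * ∑ j ∈ A, x j ^ 4
      = ∑ i ∈ A, ∑ j ∈ A, (if i = j then x i ^ 4 else 3 * x i ^ 2 * x j ^ 2) := by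
  have key : ∀ i ∈ A, ∑ j ∈ A, (if i = j then x i ^ 4 else 3 * x i ^ 2 * x j ^ 2)
      = 3 * x i ^ 2 * (∑ j ∈ A, x j ^ 2) - 2 * x i ^ 4 := by
    intro i hi
    rw [← Finset.add_sum_erase _ _ hi, if_pos rfl]
    have h2 : ∑ j ∈ A.erase i, (if i = j then x i ^ 4 else 3 * x i ^ 2 * x j ^ 2)
        = ∑ j ∈ A.erase i, 3 * x i ^ 2 * x j ^ 2 :=
      Finset.sum_congr rfl fun j hj => if_neg (fun h => (Finset.mem_erase.mp hj).1 h.symm)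
    rw [h2, ← Finset.mul_sum, Finset.sum_erase_eq_sub hi]
    ring
  rw [Finset.sum_congr rfl key, Finset.sum_sub_distrib, ← Finset.sum_mul,
    ← Finset.mul_sum, ← Finset.mul_sum]
  ring

lemma swap_sum {ι : Type*} [Fintype ι] [DecidableEq ι]
    (P : Finset (Finset ι)) (D : ι → ι → ℝ) :
    ∑ A ∈ P, ∑ i ∈ A, ∑ j ∈ A, D i j
      = ∑ i, ∑ j, ((P.filter (fun A => i ∈ A ∧ j ∈ A)).card : ℝ) * D i j := by
  have step : ∀ A ∈ P, ∑ i ∈ A, ∑ j ∈ A, D i j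
      = ∑ i, ∑ j, (if i ∈ A ∧ j ∈ A then D i j else 0) := by
    intro A _
    have inner : ∀ i : ι, ∑ j, (if i ∈ A ∧ j ∈ A then D i j else 0)
        = (if i ∈ A then ∑ j ∈ A, D i j else 0) := by
      intro i
      by_cases hi : i ∈ A
      · simp only [hi, true_and, if_true]
        rw [← Finset.sum_filter]
        congr 1
        simp [Finset.filter_mem_eq_inter]
      · simp [hi]
    rw [Finset.sum_congr rfl (fun i _ => inner i), ← Finset.sum_filter]
    congr 1
    simp [Finset.filter_mem_eq_inter]
  rw [Finset.sum_congr rfl step, Finset.sum_comm]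
  refine Finset.sum_congr rfl fun i _ => ?_
  rw [Finset.sum_comm]
  refine Finset.sum_congr rfl fun j _ => ?_
  rw [← Finset.sum_filter, Finset.sum_const, nsmul_eq_mul]

lemma choose_succ_eq (m : ℕ) : (3*m+3).choose (m+1) = 3 * (3*m+2).choose m := by
  have h := Nat.add_one_mul_choose_eq (3*m+2) m
  have h' : (3*m+3) * (3*m+2).choose m = (3*m+3).choose (m+1) * (m+1) := by
    simpa [Nat.succ_eq_add_one] using h
  apply Nat.eq_of_mul_eq_mul_right (Nat.succ_pos m)
  rw [← h', Nat.succ_eq_add_one]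
  ring

lemma count_diag {ι : Type*} [Fintype ι] [DecidableEq ι] (i : ι) (r : ℕ) :
    (((Finset.powersetCard (r + 1) (univ : Finset ι)).filter
        (fun A => i ∈ A ∧ i ∈ A)).card) = (Fintype.card ι - 1).choose r := by
  have h := card_powersetCard_filter_subset (univ : Finset ι) {i} (by simp) r
  simp only [Finset.card_singleton, Finset.card_univ] at h
  rw [← h]
  congr 1
  apply Finset.filter_congr
  intro A _
  simp [Finset.singleton_subset_iff, and_self]

lemma count_off {ι : Type*} [Fintype ι] [DecidableEq ι] {i j : ι} (hij : i ≠ j) (r : ℕ) :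
    (((Finset.powersetCard (r + 2) (univ : Finset ι)).filter
        (fun A => i ∈ A ∧ j ∈ A)).card) = (Fintype.card ι - 2).choose r := by
  have h := card_powersetCard_filter_subset (univ : Finset ι) {i, j} (by simp) r
  rw [Finset.card_pair hij, Finset.card_univ] at h
  rw [← h]
  congr 1
  apply Finset.filter_congr
  intro A _
  simp [Finset.insert_subset_iff, Finset.singleton_subset_iff]

theorem kurschak_identity (k : ℕ) (hk : 1 ≤ k) (x : Fin (3 * k + 1) → ℝ) :
    2 ^ k * ((3 * k).choose k : ℝ) * (∑ i, x i ^ 2) ^ 2 =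
      ∑ A ∈ Finset.powersetCard (k + 1) (Finset.univ : Finset (Fin (3 * k + 1))),
        ∑ ε ∈ Finset.univ.filter (fun ε : Fin (3 * k + 1) → Bool =>
            (∀ j, j ∉ A → ε j = true) ∧ ∀ j ∈ A, (∀ i ∈ A, j ≤ i) → ε j = true),
          (∑ j ∈ A, sgn (ε j) * x j) ^ 4 := by
  obtain ⟨m, rfl⟩ : ∃ m, k = m + 1 := ⟨k - 1, by omega⟩
  apply mul_left_cancel₀ (two_ne_zero (α := ℝ))
  rw [Finset.mul_sum]
  have hRHS : ∀ A ∈ Finset.powersetCard (m + 1 + 1)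
      (Finset.univ : Finset (Fin (3 * (m + 1) + 1))),
      2 * ∑ ε ∈ Finset.univ.filter (fun ε : Fin (3 * (m + 1) + 1) → Bool =>
            (∀ j, j ∉ A → ε j = true) ∧ ∀ j ∈ A, (∀ i ∈ A, j ≤ i) → ε j = true),
          (∑ j ∈ A, sgn (ε j) * x j) ^ 4
      = 2 ^ (m + 1 + 1) *
          ∑ i ∈ A, ∑ j ∈ A, (if i = j then x i ^ 4 else 3 * x i ^ 2 * x j ^ 2) := by
    intro A hA
    rw [Finset.mem_powersetCard] at hA
    have hcard : A.card = m + 1 + 1 := hA.2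
    have hne : A.Nonempty := Finset.card_pos.mp (by omega)
    rw [filter_eq A hne, sgnSet_half A x (A.min' hne) (A.min'_mem hne),
      sgnSet_sum_four, hcard, ← D_expand]
  rw [Finset.sum_congr rfl hRHS, ← Finset.mul_sum, swap_sum]
  have hcardFin : Fintype.card (Fin (3 * (m + 1) + 1)) = 3 * m + 4 := by
    simp; ring
  have hC : ((3 * (m + 1)).choose (m + 1)) = 3 * ((3 * m + 2).choose m) := by
    rw [show 3 * (m + 1) = 3 * m + 3 by ring]
    exact choose_succ_eq m
  have hsq : (∑ i, x i ^ 2) ^ 2 = ∑ i, ∑ j, x i ^ 2 * x j ^ 2 := by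
    rw [sq, Finset.sum_mul_sum]
  rw [hsq]
  rw [show (2:ℝ) * (2 ^ (m + 1) * ((3 * (m + 1)).choose (m + 1) : ℝ) *
        ∑ i, ∑ j, x i ^ 2 * x j ^ 2)
      = 2 ^ (m + 1 + 1) *
        ∑ i, (((3 * (m + 1)).choose (m + 1) : ℝ) * ∑ j, x i ^ 2 * x j ^ 2) from by
    rw [← Finset.mul_sum]; ring]
  congr 1
  refine Finset.sum_congr rfl fun i _ => ?_
  rw [Finset.mul_sum]
  refine Finset.sum_congr rfl fun j _ => ?_
  by_cases hij : i = j
  · subst hij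
    have hN := count_diag (ι := Fin (3 * (m + 1) + 1)) i (m + 1)
    rw [hcardFin] at hN
    rw [if_pos rfl, hN, show (3 * m + 4 - 1) = 3 * m + 3 by omega, choose_succ_eq, hC]
    push_cast
    ring
  · have hN := count_off (ι := Fin (3 * (m + 1) + 1)) hij m
    rw [hcardFin] at hN
    rw [if_neg hij, hN, show (3 * m + 4 - 2) = 3 * m + 2 by omega, hC]
    push_cast
    ring
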